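/- Let B be a unital C*-algebra, A ⊆ B an abelian unital C*-subalgebra, and suppose every pure state of A extends uniquely to a state of B. Define Δ = {b ∈ B : ψ_x(b*b) = 0 for all characters x of A}, where ψ_x is the unique state extension of the character x. Then Δ is a closed subspace of B, and Δ coincides with the left kernel {b ∈ B : E(b*b) = 0} of any conditional expectation E : B → A. -/

import Mathlib

open Filter Topology

section StateDefs
variable {E : Type*} [NonUnitalNormedRing E] [StarRing E] [NormedSpace ℂ E]

/-- A state on a (possibly non-unital) C*-algebra: a norm-one linear functional
which is positive, i.e. takes nonnegative real values on elements `star b * b`. -/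
def IsState (ψ : E →L[ℂ] ℂ) : Prop :=
  ‖ψ‖ = 1 ∧ ∀ b : E, ∃ r : ℝ, 0 ≤ r ∧ ψ (star b * b) = (r : ℂ)

/-- A pure state: a state which is an extreme point of the state space. -/
def IsPureState (ψ : E →L[ℂ] ℂ) : Prop :=
  IsState ψ ∧ ∀ ψ₁ ψ₂ : E →L[ℂ] ℂ, ∀ t : ℝ, IsState ψ₁ → IsState ψ₂ →
    0 < t → t < 1 → ψ = t • ψ₁ + (1 - t) • ψ₂ → ψ₁ = ψ

end StateDefs

set_option linter.unusedSectionVars false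

section AuxCS
variable {B : Type*} [NonUnitalNormedRing B] [StarRing B] [NormedSpace ℂ B] [StarModule ℂ B]
  [SMulCommClass ℂ B B] [IsScalarTower ℂ B B]

lemma aux_im_zero (φ : B →L[ℂ] ℂ)
    (hφ : ∀ b : B, ∃ r : ℝ, 0 ≤ r ∧ φ (star b * b) = (r : ℂ)) (b : B) :
    (φ (star b * b)).im = 0 ∧ 0 ≤ (φ (star b * b)).re := by
  obtain ⟨r, hr, h⟩ := hφ b
  rw [h]; simp [hr]

lemma aux_expand (s : ℂ) (a b : B) :
    star (a + s • b) * (a + s • b)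
      = star a * a + (s • (star a * b) +
        ((starRingEnd ℂ s) • (star b * a) +
          (s * (starRingEnd ℂ s)) • (star b * b))) := by
  rw [star_add, star_smul, starRingEnd_apply, add_mul, mul_add, mul_add]
  simp only [smul_mul_assoc, mul_smul_comm, smul_smul]
  abel

lemma aux_herm (φ : B →L[ℂ] ℂ)
    (hφ : ∀ b : B, ∃ r : ℝ, 0 ≤ r ∧ φ (star b * b) = (r : ℂ)) (a b : B) :
    φ (star b * a) = (starRingEnd ℂ) (φ (star a * b)) := by
  set z := φ (star a * b) with hz
  set w := φ (star b * a) with hw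
  have h1 : z.im + w.im = 0 := by
    have := (aux_im_zero φ hφ (a + (1 : ℂ) • b)).1
    rw [aux_expand 1 a b] at this
    simp only [map_add, map_smul, map_one, one_smul, smul_eq_mul, one_mul, mul_one,
      Complex.add_im] at this
    have ha0 := (aux_im_zero φ hφ a).1
    have hb0 := (aux_im_zero φ hφ b).1
    rw [ha0, hb0] at this
    linarith
  have h2 : z.re - w.re = 0 := by
    have := (aux_im_zero φ hφ (a + (Complex.I : ℂ) • b)).1
    rw [aux_expand Complex.I a b] at this
    simp only [map_add, map_smul, smul_eq_mul, Complex.add_im, Complex.conj_I] at this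
    have ha0 := (aux_im_zero φ hφ a).1
    have hb0 := (aux_im_zero φ hφ b).1
    have h4 : (Complex.I * -Complex.I) = (1 : ℂ) := by
      simp [Complex.I_mul_I]
    rw [ha0, h4, one_mul, hb0] at this
    simp only [Complex.mul_im, Complex.I_re, Complex.I_im, Complex.neg_re, Complex.neg_im,
      neg_mul, one_mul, zero_mul, mul_zero] at this
    linarith
  apply Complex.ext
  · simp only [Complex.conj_re]; linarith
  · simp only [Complex.conj_im]; linarith

lemma aux_cs (φ : B →L[ℂ] ℂ)
    (hφ : ∀ b : B, ∃ r : ℝ, 0 ≤ r ∧ φ (star b * b) = (r : ℂ))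
    {b : B} (hb : φ (star b * b) = 0) (c : B) : φ (star c * b) = 0 := by
  have key : ∀ c : B, (φ (star c * b)).re = 0 := by
    intro c
    by_contra hne
    set z := φ (star c * b) with hz
    set A := (φ (star c * c)).re with hA
    have hquad : ∀ t : ℝ, 0 ≤ A + 2 * t * z.re := by
      intro t
      have hpos := (aux_im_zero φ hφ (c + (t : ℝ) • b)).2
      have hcast : ((t : ℝ) • b : B) = ((t : ℂ) • b) := by
        simp [Complex.coe_smul]
      rw [hcast, aux_expand (t : ℂ) c b] at hpos
      have hbc : φ (star b * c) = (starRingEnd ℂ) z := aux_herm φ hφ c b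
      simp only [map_add, map_smul, smul_eq_mul, hbc, hb, mul_zero, add_zero,
        Complex.conj_ofReal] at hpos
      calc (0:ℝ) ≤ _ := hpos
        _ = A + 2 * t * z.re := by
            simp only [Complex.add_re, Complex.mul_re, Complex.ofReal_re, Complex.ofReal_im,
              Complex.conj_re, Complex.conj_im]
            ring
    have h2z : 2 * z.re ≠ 0 := by
      simp only [mul_ne_zero_iff]; exact ⟨two_ne_zero, hne⟩
    have heval : 2 * ((-A - 1) / (2 * z.re)) * z.re = -A - 1 := by
      field_simp
    have := hquad ((-A - 1) / (2 * z.re))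
    rw [heval] at this
    linarith
  have h1 := key c
  have h2 := key ((Complex.I : ℂ) • c)
  rw [show star ((Complex.I : ℂ) • c) * b = (-Complex.I : ℂ) • (star c * b) by
      rw [star_smul, smul_mul_assoc]; simp [Complex.conj_I], map_smul] at h2
  simp only [smul_eq_mul, neg_mul, Complex.neg_re, Complex.mul_re, Complex.I_re, Complex.I_im,
    zero_mul, one_mul, zero_sub, neg_neg] at h2
  apply Complex.ext <;> simp [h1, h2]

end AuxCS

lemma aux_gelfand {B : Type*} [NormedRing B] [StarRing B] [CStarRing B]
    [NormedAlgebra ℂ B] [StarModule ℂ B] [CompleteSpace B]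
    (A : StarSubalgebra ℂ B)
    (habel : ∀ a ∈ A, ∀ a' ∈ A, a * a' = a' * a)
    {a : B} (ha : a ∈ A) (hsa : IsSelfAdjoint a)
    (h0 : ∀ x : ↥A →ₐ[ℂ] ℂ, x ⟨a, ha⟩ = 0) : a = 0 := by
  letI : CStarAlgebra B := {}
  set Ac := A.topologicalClosure with hAc
  letI : CommRing ↥Ac := A.commRingTopologicalClosure fun x y => Subtype.ext (habel _ x.2 _ y.2)
  letI : NormedCommRing ↥Ac := { (inferInstance : NormedRing ↥Ac) with mul_comm := mul_comm }
  haveI : CompleteSpace ↥Ac := (A.isClosed_topologicalClosure).completeSpace_coe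
  set a' : ↥Ac := ⟨a, A.le_topologicalClosure ha⟩ with ha'
  have hspec : spectrum ℂ a' ⊆ {0} := by
    intro z hz
    obtain ⟨f, hf⟩ := WeakDual.CharacterSpace.mem_spectrum_iff_exists.mp hz
    have h := h0 ((WeakDual.CharacterSpace.equivAlgHom f).comp
      (StarSubalgebra.inclusion (A.le_topologicalClosure)).toAlgHom)
    simp only [AlgHom.coe_comp, Function.comp_apply, StarAlgHom.coe_toAlgHom,
      WeakDual.CharacterSpace.equivAlgHom_coe] at h
    have hincl : (StarSubalgebra.inclusion (A.le_topologicalClosure) ⟨a, ha⟩ : ↥Ac) = a' := rfl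
    rw [hincl] at h
    rw [h] at hf
    exact hf ▸ rfl
  have hsub : spectrum ℂ a ⊆ {0} :=
    (spectrum.subset_subalgebra a').trans hspec
  have hrad : spectralRadius ℂ a = 0 := by
    refine le_antisymm (iSup₂_le fun k hk => ?_) zero_le
    have : k = 0 := hsub hk
    simp [this]
  have hn := hsa.spectralRadius_eq_nnnorm
  rw [hrad] at hn
  have : ‖a‖₊ = 0 := by exact_mod_cast hn.symm
  simpa using this

variable {B : Type*} [NormedRing B] [StarRing B] [CStarRing B]
  [NormedAlgebra ℂ B] [StarModule ℂ B] [CompleteSpace B]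

/-- A conditional expectation from `B` onto the subalgebra `A`: a contractive,
positive, unital, `A`-bimodular projection of `B` onto `A`. -/
def IsCondExp (A : StarSubalgebra ℂ B) (E : B →L[ℂ] B) : Prop :=
  (∀ b : B, E b ∈ A) ∧ (∀ a ∈ A, E a = a) ∧ ‖(E : B →L[ℂ] B)‖ ≤ 1 ∧
  (∀ b : B, ∃ c : B, E (star b * b) = star c * c) ∧
  (∀ a ∈ A, ∀ b : B, E (a * b) = a * E b ∧ E (b * a) = E b * a)

/-- The "opaque" set `Δ = {b : ψ_x (b* b) = 0 for all characters x}` (with `ψ_x`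
the unique state extension of the character `x` of the abelian subalgebra `A`) is
a closed subspace of `B`, and coincides with the left kernel of any conditional
expectation `E : B → A`. -/
theorem opaque_eq_leftKernel (A : StarSubalgebra ℂ B)
    (habel : ∀ a ∈ A, ∀ a' ∈ A, a * a' = a' * a)
    (ψ : (↥A →ₐ[ℂ] ℂ) → (B →L[ℂ] ℂ))
    (hstate : ∀ x, IsState (ψ x))
    (hext : ∀ x, ∀ a : ↥A, ψ x ↑a = x a)
    (huniq : ∀ (x : ↥A →ₐ[ℂ] ℂ) (ρ : B →L[ℂ] ℂ), IsState ρ →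
      (∀ a : ↥A, ρ ↑a = x a) → ρ = ψ x) :
    (∃ S : Submodule ℂ B,
        (S : Set B) = {b : B | ∀ x, ψ x (star b * b) = 0}) ∧
    IsClosed {b : B | ∀ x, ψ x (star b * b) = 0} ∧
    ∀ E : B →L[ℂ] B, IsCondExp A E →
      {b : B | ∀ x, ψ x (star b * b) = 0} = {b : B | E (star b * b) = 0} := by
  have hpos : ∀ x, ∀ b : B, ∃ r : ℝ, 0 ≤ r ∧ ψ x (star b * b) = (r : ℂ) :=
    fun x => (hstate x).2
  refine ⟨?_, ?_, ?_⟩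
  · -- Submodule
    refine ⟨{ carrier := {b : B | ∀ x, ψ x (star b * b) = 0}
              add_mem' := ?_
              zero_mem' := ?_
              smul_mem' := ?_ }, rfl⟩
    · intro a b haΔ hbΔ x
      have h1 : ψ x (star a * a) = 0 := haΔ x
      have h2 : ψ x (star b * b) = 0 := hbΔ x
      have hab : ψ x (star a * b) = 0 := aux_cs (ψ x) (hpos x) h2 a
      have hba : ψ x (star b * a) = 0 := aux_cs (ψ x) (hpos x) h1 b
      have hone : (a + b : B) = a + (1 : ℂ) • b := by simp
      show ψ x (star (a + b) * (a + b)) = 0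
      rw [hone, aux_expand (1 : ℂ) a b]
      simp [h1, h2, hab, hba]
    · intro x
      show ψ x (star (0 : B) * 0) = 0
      simp
    · intro r b hbΔ x
      have hs : star (r • b) * (r • b) = ((starRingEnd ℂ r) * r) • (star b * b) := by
        rw [star_smul, smul_mul_assoc, mul_smul_comm, smul_smul, starRingEnd_apply]
      show ψ x (star (r • b) * (r • b)) = 0
      rw [hs, map_smul, hbΔ x, smul_zero]
  · -- Closed
    have heq : {b : B | ∀ x, ψ x (star b * b) = 0}
        = ⋂ x, (fun b : B => ψ x (star b * b)) ⁻¹' {0} := by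
      ext b; simp [Set.mem_iInter]
    rw [heq]
    exact isClosed_iInter fun x => IsClosed.preimage
      ((ψ x).continuous.comp (continuous_star.mul continuous_id)) isClosed_singleton
  · -- Conditional expectation
    rintro E ⟨hmem, hfix, hnorm, hposE, -⟩
    have hkey : ∀ x : ↥A →ₐ[ℂ] ℂ, ∀ b : B, ψ x (E b) = ψ x b := by
      intro x
      haveI : Nontrivial B := by
        refine ⟨1, 0, fun h => ?_⟩
        have h1 : (1 : ↥A) = 0 := Subtype.ext (by simpa using h)
        have h2 := map_one x
        rw [h1, map_zero] at h2
        exact one_ne_zero h2.symm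
      set ρ : B →L[ℂ] ℂ := (ψ x).comp E with hρ
      have hρ1 : ρ 1 = 1 := by
        have hE1 : E 1 = 1 := hfix 1 A.one_mem
        have hx1 := hext x 1
        simp only [OneMemClass.coe_one, map_one] at hx1
        simp [hρ, hE1, hx1]
      have hρstate : IsState ρ := by
        constructor
        · apply le_antisymm
          · calc ‖ρ‖ ≤ ‖ψ x‖ * ‖E‖ := ContinuousLinearMap.opNorm_comp_le _ _
              _ ≤ 1 := by rw [(hstate x).1, one_mul]; exact hnorm
          · calc (1 : ℝ) = ‖ρ 1‖ := by rw [hρ1]; simp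
              _ ≤ ‖ρ‖ * ‖(1 : B)‖ := ρ.le_opNorm 1
              _ = ‖ρ‖ := by rw [norm_one, mul_one]
        · intro b
          obtain ⟨c, hc⟩ := hposE b
          obtain ⟨r, hr, hrc⟩ := (hstate x).2 c
          exact ⟨r, hr, by simp [hρ, hc, hrc]⟩
      have hρA : ∀ a : ↥A, ρ ↑a = x a := by
        intro a
        have hEa : E ↑a = ↑a := hfix _ a.2
        simp [hρ, hEa, hext x a]
      have hu := huniq x ρ hρstate hρA
      intro b
      have := DFunLike.congr_fun hu b
      simpa [hρ] using this
    ext b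
    simp only [Set.mem_setOf_eq]
    constructor
    · intro hb
      obtain ⟨c, hc⟩ := hposE b
      have haA : E (star b * b) ∈ A := hmem _
      have hsa : IsSelfAdjoint (E (star b * b)) := by
        rw [hc]; exact IsSelfAdjoint.star_mul_self c
      apply aux_gelfand A habel haA hsa
      intro x
      have h1 : ψ x (E (star b * b)) = 0 := by rw [hkey x]; exact hb x
      have h2 := hext x ⟨E (star b * b), haA⟩
      rw [← h2]
      exact h1
    · intro hb x
      rw [← hkey x, hb, map_zero]
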